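/- The set B = {λ ∈ 𝔻 × 𝔻* × 𝔻 × 𝔻* : m(λ₁,λ₃) < m(λ₂,λ₄)} is path-connected, where 𝔻* = 𝔻∖{0} and m is the Möbius distance on 𝔻. -/

import Mathlib

open Complex Metric

def Bset : Set (ℂ × ℂ × ℂ × ℂ) :=
    {x : ℂ × ℂ × ℂ × ℂ |
      x.1 ∈ ball (0 : ℂ) 1 ∧ x.2.1 ∈ ball (0 : ℂ) 1 \ {0} ∧
      x.2.2.1 ∈ ball (0 : ℂ) 1 ∧ x.2.2.2 ∈ ball (0 : ℂ) 1 \ {0} ∧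
      ‖x.1 - x.2.2.1‖ / ‖1 - (starRingEnd ℂ) x.1 * x.2.2.1‖ <
        ‖x.2.1 - x.2.2.2‖ / ‖1 - (starRingEnd ℂ) x.2.1 * x.2.2.2‖}

lemma aux_ball_diff_countable {K : Set ℂ} (hK : K.Countable) :
    IsPathConnected (ball (0:ℂ) 1 \ K) := by
  have hrank : 1 < Module.rank ℝ ℂ := by rw [Complex.rank_real_complex]; norm_num
  let e : ℂ ≃ₜ ball (0:ℂ) 1 := Homeomorph.unitBall
  let f : ℂ → ℂ := fun z => (e z : ℂ)
  have hf : Continuous f := continuous_subtype_val.comp e.continuous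
  have hinj : Function.Injective f := Subtype.val_injective.comp e.injective
  have hKpre : (f ⁻¹' K).Countable := hK.preimage hinj
  have h1 : IsPathConnected ((f ⁻¹' K)ᶜ) :=
    hKpre.isPathConnected_compl_of_one_lt_rank hrank
  have h2 := h1.image hf
  have himg : f '' (f ⁻¹' K)ᶜ = ball (0:ℂ) 1 \ K := by
    ext z
    constructor
    · rintro ⟨w, hw, rfl⟩
      exact ⟨(e w).2, hw⟩
    · rintro ⟨hz, hzK⟩
      refine ⟨e.symm ⟨z, hz⟩, ?_, ?_⟩
      · simp only [Set.mem_compl_iff, Set.mem_preimage, f, e.apply_symm_apply]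
        exact hzK
      · simp [f, e.apply_symm_apply]
  rwa [himg] at h2

lemma aux_den_pos {a c : ℂ} (ha : ‖a‖ < 1) (hc : ‖c‖ < 1) :
    0 < ‖1 - (starRingEnd ℂ) a * c‖ := by
  have habs : ‖(starRingEnd ℂ) a * c‖ < 1 := by
    rw [norm_mul, Complex.norm_conj]
    nlinarith [norm_nonneg a, norm_nonneg c]
  have hne : (1 : ℂ) - (starRingEnd ℂ) a * c ≠ 0 := by
    intro h0
    rw [sub_eq_zero] at h0
    rw [← h0] at habs
    simp at habs
  exact norm_pos_iff.mpr hne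

lemma aux_key {k : ℂ} (hk : ‖k‖ < 1) {s : ℝ} (hs0 : 0 ≤ s) (hs1 : s ≤ 1) :
    s * ‖1 - k‖ ≤ ‖1 - ((s^2 : ℝ) : ℂ) * k‖ := by
  have hnsq : Complex.normSq k < 1 := by
    rw [← Complex.sq_norm] at *
    nlinarith [norm_nonneg k]
  have h1 : (s * ‖1 - k‖)^2 ≤ (‖1 - ((s^2 : ℝ) : ℂ) * k‖)^2 := by
    rw [mul_pow, Complex.sq_norm, Complex.sq_norm]
    simp only [Complex.normSq_apply, Complex.sub_re, Complex.sub_im, Complex.one_re,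
      Complex.one_im, Complex.mul_re, Complex.mul_im, Complex.ofReal_re, Complex.ofReal_im]
    rw [Complex.normSq_apply] at hnsq
    have hA : (0:ℝ) ≤ 1 - s^2 := by nlinarith
    have hB : (0:ℝ) ≤ 1 - s^2 * (k.re * k.re + k.im * k.im) := by
      nlinarith [sq_nonneg s, mul_nonneg (mul_nonneg hs0 hs0)
        (add_nonneg (mul_self_nonneg k.re) (mul_self_nonneg k.im))]
    nlinarith [mul_nonneg hA hB]
  nlinarith [norm_nonneg (1 - ((s^2 : ℝ) : ℂ) * k),
    mul_nonneg hs0 (norm_nonneg (1 - k)), h1]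

lemma aux_shrink {a c : ℂ} (ha : ‖a‖ < 1) (hc : ‖c‖ < 1)
    {s : ℝ} (hs0 : 0 ≤ s) (hs1 : s ≤ 1) :
    ‖(s:ℂ)*a - (s:ℂ)*c‖ /
        ‖1 - (starRingEnd ℂ) ((s:ℂ)*a) * ((s:ℂ)*c)‖ ≤
      ‖a - c‖ / ‖1 - (starRingEnd ℂ) a * c‖ := by
  have hsa : ‖(s:ℂ)*a‖ < 1 := by
    rw [norm_mul, Complex.norm_real, Real.norm_eq_abs, _root_.abs_of_nonneg hs0]
    nlinarith [norm_nonneg a]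
  have hsc : ‖(s:ℂ)*c‖ < 1 := by
    rw [norm_mul, Complex.norm_real, Real.norm_eq_abs, _root_.abs_of_nonneg hs0]
    nlinarith [norm_nonneg c]
  have hd2 := aux_den_pos hsa hsc
  have hd1 := aux_den_pos ha hc
  have e1 : (starRingEnd ℂ) ((s:ℂ)*a) * ((s:ℂ)*c)
      = ((s^2 : ℝ) : ℂ) * ((starRingEnd ℂ) a * c) := by
    rw [map_mul, Complex.conj_ofReal]
    push_cast
    ring
  have e2 : (s:ℂ)*a - (s:ℂ)*c = (s:ℂ)*(a-c) := by ring
  rw [e1, e2, norm_mul, Complex.norm_real, Real.norm_eq_abs, _root_.abs_of_nonneg hs0]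
  rw [e1] at hd2
  rw [div_le_div_iff₀ hd2 hd1]
  have hk : ‖(starRingEnd ℂ) a * c‖ < 1 := by
    rw [norm_mul, Complex.norm_conj]
    nlinarith [norm_nonneg a, norm_nonneg c]
  have key := aux_key hk hs0 hs1
  nlinarith [mul_le_mul_of_nonneg_left key (norm_nonneg (a - c))]

lemma aux_mem {b d : ℂ} (hb : ‖b‖ < 1) (hb0 : b ≠ 0)
    (hd : ‖d‖ < 1) (hd0 : d ≠ 0) (hbd : b ≠ d) :
    ((0:ℂ), b, (0:ℂ), d) ∈ Bset := by
  refine ⟨by simp, ⟨?_, hb0⟩, by simp, ⟨?_, hd0⟩, ?_⟩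
  · rwa [mem_ball_zero_iff]
  · rwa [mem_ball_zero_iff]
  · have : ‖(0:ℂ) - 0‖ / ‖1 - (starRingEnd ℂ) 0 * 0‖ = 0 := by simp
    rw [this]
    exact div_pos (norm_pos_iff.mpr (sub_ne_zero.2 hbd)) (aux_den_pos hb hd)

lemma aux_transport {α : Type*} [TopologicalSpace α] {s : Set α} {f : α → ℂ × ℂ × ℂ × ℂ}
    (hf : Continuous f) (hsub : ∀ z ∈ s, f z ∈ Bset) {z w : α} (h : JoinedIn s z w) :
    JoinedIn Bset (f z) (f w) :=
  (h.map hf).mono (by rintro _ ⟨u, hu, rfl⟩; exact hsub u hu)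

theorem B_path_connected :
    IsPathConnected {x : ℂ × ℂ × ℂ × ℂ |
      x.1 ∈ ball (0 : ℂ) 1 ∧ x.2.1 ∈ ball (0 : ℂ) 1 \ {0} ∧
      x.2.2.1 ∈ ball (0 : ℂ) 1 ∧ x.2.2.2 ∈ ball (0 : ℂ) 1 \ {0} ∧
      ‖x.1 - x.2.2.1‖ / ‖1 - (starRingEnd ℂ) x.1 * x.2.2.1‖ <
        ‖x.2.1 - x.2.2.2‖ / ‖1 - (starRingEnd ℂ) x.2.1 * x.2.2.2‖} := by
  show IsPathConnected Bset
  have hhalf : ‖((1/2 : ℝ) : ℂ)‖ < 1 := by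
    rw [Complex.norm_real, Real.norm_eq_abs, _root_.abs_of_nonneg (by norm_num)]; norm_num
  have hhalf0 : (((1/2 : ℝ)) : ℂ) ≠ 0 := by norm_num
  have hq : ‖(((-(1/4) : ℝ)) : ℂ)‖ < 1 := by
    rw [Complex.norm_real, Real.norm_eq_abs, abs_neg, _root_.abs_of_nonneg (by norm_num)]; norm_num
  have hq0 : (((-(1/4) : ℝ)) : ℂ) ≠ 0 := by norm_num
  have hqne : (((1/2 : ℝ)) : ℂ) ≠ (((-(1/4) : ℝ)) : ℂ) := by norm_num
  refine ⟨((0:ℂ), (((1/2 : ℝ)) : ℂ), (0:ℂ), (((-(1/4) : ℝ)) : ℂ)),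
    aux_mem hhalf hhalf0 hq hq0 hqne, ?_⟩
  rintro ⟨a, b, c, d⟩ ⟨ha, ⟨hb, hb0⟩, hc, ⟨hd, hd0⟩, hlt⟩
  simp only [mem_ball_zero_iff] at ha hb hc hd
  simp only [Set.mem_singleton_iff] at hb0 hd0
  have hbd : b ≠ d := by
    intro h
    rw [h, sub_self, norm_zero, zero_div] at hlt
    exact absurd hlt (not_lt.2 (div_nonneg (norm_nonneg _) (norm_nonneg _)))
  -- Step 1 : shrink a, c to 0
  have step1 : JoinedIn Bset (a, b, c, d) ((0:ℂ), b, (0:ℂ), d) := by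
    have hIcc : JoinedIn (Set.Icc (0:ℝ) 1) 1 0 :=
      ((convex_Icc (0:ℝ) 1).isPathConnected ⟨0, by norm_num⟩).joinedIn
        1 (by norm_num) 0 (by norm_num)
    have h := aux_transport (f := fun t : ℝ => (((t:ℂ) * a, b, (t:ℂ) * c, d) : ℂ × ℂ × ℂ × ℂ))
      (by continuity) ?_ hIcc
    · simpa using h
    · rintro t ⟨ht0, ht1⟩
      have hta : ‖(t:ℂ) * a‖ < 1 := by
        rw [norm_mul, Complex.norm_real, Real.norm_eq_abs, _root_.abs_of_nonneg ht0]
        nlinarith [norm_nonneg a]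
      have htc : ‖(t:ℂ) * c‖ < 1 := by
        rw [norm_mul, Complex.norm_real, Real.norm_eq_abs, _root_.abs_of_nonneg ht0]
        nlinarith [norm_nonneg c]
      refine ⟨?_, ⟨?_, hb0⟩, ?_, ⟨?_, hd0⟩, ?_⟩
      · rwa [mem_ball_zero_iff]
      · rwa [mem_ball_zero_iff]
      · rwa [mem_ball_zero_iff]
      · rwa [mem_ball_zero_iff]
      · exact lt_of_le_of_lt (aux_shrink ha hc ht0 ht1) hlt
  -- Step 2 : move d to -b/2 inside ball \ {0, b}
  have hmb : ‖-b/2‖ < 1 := by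
    rw [norm_div, norm_neg]
    simp only [Complex.norm_two]
    nlinarith [norm_nonneg b]
  have hmb0 : -b/2 ≠ 0 := by
    simpa using hb0
  have hmbb : -b/2 ≠ b := by
    intro h
    apply hb0
    have : (3:ℂ) * b = 0 := by linear_combination (-2 : ℂ) * h
    simpa using this
  have step2 : JoinedIn Bset ((0:ℂ), b, (0:ℂ), d) ((0:ℂ), b, (0:ℂ), -b/2) := by
    have hpc := aux_ball_diff_countable (K := {0, b}) ((Set.countable_singleton b).insert 0)
    have hjd : JoinedIn (ball (0:ℂ) 1 \ {0, b}) d (-b/2) := by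
      refine hpc.joinedIn d ⟨?_, ?_⟩ (-b/2) ⟨?_, ?_⟩
      · rwa [mem_ball_zero_iff]
      · simp only [Set.mem_insert_iff, Set.mem_singleton_iff]
        push_neg
        exact ⟨hd0, fun h => hbd h.symm⟩
      · rwa [mem_ball_zero_iff]
      · simp only [Set.mem_insert_iff, Set.mem_singleton_iff]
        push_neg
        exact ⟨hmb0, hmbb⟩
    exact aux_transport (f := fun z : ℂ => (((0:ℂ), b, (0:ℂ), z) : ℂ × ℂ × ℂ × ℂ))
      (by continuity)
      (by
        rintro z ⟨hz, hzK⟩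
        rw [mem_ball_zero_iff] at hz
        simp only [Set.mem_insert_iff, Set.mem_singleton_iff] at hzK
        push_neg at hzK
        exact aux_mem hb hb0 hz hzK.1 (fun h => hzK.2 h.symm)) hjd
  -- Step 3 : move b to 1/2 (with d = -b/2 locked)
  have step3 : JoinedIn Bset ((0:ℂ), b, (0:ℂ), -b/2)
      ((0:ℂ), (((1/2 : ℝ)) : ℂ), (0:ℂ), (((-(1/4) : ℝ)) : ℂ)) := by
    have hpc := aux_ball_diff_countable (Set.countable_singleton (0:ℂ))
    have hjb : JoinedIn (ball (0:ℂ) 1 \ {0}) b (((1/2 : ℝ)) : ℂ) := by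
      refine hpc.joinedIn b ⟨?_, hb0⟩ _ ⟨?_, hhalf0⟩
      · rwa [mem_ball_zero_iff]
      · rw [mem_ball_zero_iff]
        exact hhalf
    have h := aux_transport (f := fun z : ℂ => (((0:ℂ), z, (0:ℂ), -z/2) : ℂ × ℂ × ℂ × ℂ))
      (by continuity)
      (by
        rintro z ⟨hz, hz0⟩
        rw [mem_ball_zero_iff] at hz
        simp only [Set.mem_singleton_iff] at hz0
        have hz2 : ‖-z/2‖ < 1 := by
          rw [norm_div, norm_neg]
          simp only [Complex.norm_two]
          nlinarith [norm_nonneg z]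
        have hz20 : -z/2 ≠ 0 := by simpa using hz0
        have hzz : z ≠ -z/2 := by
          intro h
          apply hz0
          have : (3:ℂ) * z = 0 := by linear_combination (2 : ℂ) * h
          simpa using this
        exact aux_mem hz hz0 hz2 hz20 hzz) hjb
    have hend : -(((1/2 : ℝ)) : ℂ)/2 = (((-(1/4) : ℝ)) : ℂ) := by push_cast; ring
    simpa only [hend] using h
  exact ((step1.trans step2).trans step3).symm
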